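/- arXiv:0804.0686 — 3 statements merged into one kernel-verified Lean document; each statement's English description precedes it below -/
import Mathlib

section
/- For any distributions P, P̄ on a finite set Y, any [0,1]-valued test function f on Y, and any s ≤ 0: (E_P[1−f])^{1−s} · (E_{P̄}[1−f])^s ≤ Σ_y P̄(y)^s P(y)^{1-s}. -/
theorem stmt6 {Y : Type*} [Fintype Y] (P Pb : Y → ℝ)
    (hP : ∀ y, 0 < P y) (hPb : ∀ y, 0 < Pb y)
    (hP1 : ∑ y, P y = 1) (hPb1 : ∑ y, Pb y = 1)
    (f : Y → ℝ) (hf : ∀ y, f y ∈ Set.Icc (0 : ℝ) 1) (s : ℝ) (hs : s ≤ 0) :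
    (∑ y, P y * (1 - f y)) ^ (1 - s) * (∑ y, Pb y * (1 - f y)) ^ s ≤
      ∑ y, Pb y ^ s * P y ^ (1 - s) := by
  set a : Y → ℝ := fun y => P y * (1 - f y) with ha
  set b : Y → ℝ := fun y => Pb y * (1 - f y) with hb
  have hfy : ∀ y, 0 ≤ 1 - f y := fun y => by have := (hf y).2; linarith
  have hfy1 : ∀ y, 1 - f y ≤ 1 := fun y => by have := (hf y).1; linarith
  have han : ∀ y, 0 ≤ a y := fun y => mul_nonneg (hP y).le (hfy y)
  have hbn : ∀ y, 0 ≤ b y := fun y => mul_nonneg (hPb y).le (hfy y)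
  have hRHSterm : ∀ y, 0 < Pb y ^ s * P y ^ (1 - s) := fun y =>
    mul_pos (Real.rpow_pos_of_pos (hPb y) s) (Real.rpow_pos_of_pos (hP y) (1 - s))
  have hRHS : (0:ℝ) ≤ ∑ y, Pb y ^ s * P y ^ (1 - s) :=
    Finset.sum_nonneg fun y _ => (hRHSterm y).le
  rcases eq_or_lt_of_le hs with hs0 | hs0
  · -- s = 0
    subst hs0
    have hR : ∑ y, Pb y ^ (0:ℝ) * P y ^ ((1:ℝ) - 0) = 1 := by
      simp [hP1]
    rw [hR, sub_zero, Real.rpow_zero, Real.rpow_one, mul_one, ← hP1]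
    refine Finset.sum_le_sum fun y _ => ?_
    show P y * (1 - f y) ≤ P y
    nlinarith [mul_nonneg (hP y).le (hf y).1]
  · -- s < 0
    have h1s : (0:ℝ) < 1 - s := by linarith
    have h1s' : (1:ℝ) - s ≠ 0 := ne_of_gt h1s
    -- key pointwise bound for the middle sum
    have hmid : ∀ y, a y ^ (1 - s) * b y ^ s ≤ Pb y ^ s * P y ^ (1 - s) := by
      intro y
      rcases eq_or_lt_of_le (hfy y) with h0 | h0
      · have ha0 : a y = 0 := by simp [ha, ← h0]
        rw [ha0, Real.zero_rpow h1s', zero_mul]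
        exact (hRHSterm y).le
      · rw [ha, hb, Real.mul_rpow (hP y).le (hfy y),
          Real.mul_rpow (hPb y).le (hfy y)]
        have key : P y ^ (1 - s) * (1 - f y) ^ (1 - s) * (Pb y ^ s * (1 - f y) ^ s)
            = Pb y ^ s * P y ^ (1 - s) * (1 - f y) := by
          rw [mul_mul_mul_comm, ← Real.rpow_add h0,
            show (1 : ℝ) - s + s = 1 by ring, Real.rpow_one]
          ring
        rw [key]
        nlinarith [hRHSterm y, hfy y, hfy1 y]
    by_cases hB : ∑ y, b y = 0
    · have hb0 : ∀ y, b y = 0 := fun y =>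
        (Finset.sum_eq_zero_iff_of_nonneg (fun y _ => hbn y)).1 hB y (Finset.mem_univ y)
      have ha0 : ∑ y, a y = 0 := Finset.sum_eq_zero fun y _ => by
        have hby := hb0 y
        have hfy0 : 1 - f y = 0 := by
          rcases mul_eq_zero.1 hby with h | h
          · exact absurd h (ne_of_gt (hPb y))
          · exact h
        simp [ha, hfy0]
      rw [ha0, hB, Real.zero_rpow h1s', zero_mul]
      exact hRHS
    · set A := ∑ y, a y with hA
      set B := ∑ y, b y with hBdef
      have hBpos : (0:ℝ) < B :=
        lt_of_le_of_ne (Finset.sum_nonneg fun y _ => hbn y) (Ne.symm hB)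
      have hAn : 0 ≤ A := Finset.sum_nonneg fun y _ => han y
      have hpq : Real.HolderConjugate (1 - s) ((1 - s) / (-s)) := by
        rw [Real.holderConjugate_iff]
        constructor
        · linarith
        · rw [inv_div]
          field_simp
          ring
      set F : Y → ℝ := fun y => a y * b y ^ (s / (1 - s)) with hF
      set G : Y → ℝ := fun y => b y ^ (-s / (1 - s)) with hG
      have hFn : ∀ y, 0 ≤ F y := fun y =>
        mul_nonneg (han y) (Real.rpow_nonneg (hbn y) _)
      have hGn : ∀ y, 0 ≤ G y := fun y => Real.rpow_nonneg (hbn y) _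
      have hFG : ∀ y, F y * G y = a y := by
        intro y
        rcases eq_or_lt_of_le (hbn y) with h0 | h0
        · have hfy0 : 1 - f y = 0 := by
            rcases mul_eq_zero.1 h0.symm with h | h
            · exact absurd h (ne_of_gt (hPb y))
            · exact h
          have ha0 : a y = 0 := by simp [ha, hfy0]
          simp [hF, hG, ha0]
        · simp only [hF, hG]
          rw [mul_assoc, ← Real.rpow_add h0]
          have : s / (1 - s) + -s / (1 - s) = 0 := by ring
          rw [this, Real.rpow_zero, mul_one]
      have hFp : ∀ y, |F y| ^ (1 - s) = a y ^ (1 - s) * b y ^ s := by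
        intro y
        rw [abs_of_nonneg (hFn y), hF]
        rw [Real.mul_rpow (han y) (Real.rpow_nonneg (hbn y) _),
          ← Real.rpow_mul (hbn y)]
        rw [div_mul_cancel₀ s h1s']
      have hGq : ∀ y, |G y| ^ ((1 - s) / (-s)) = b y := by
        intro y
        rw [abs_of_nonneg (hGn y), hG, ← Real.rpow_mul (hbn y)]
        have : -s / (1 - s) * ((1 - s) / -s) = 1 := by
          rw [div_mul_div_comm,
            div_eq_one_iff_eq (mul_ne_zero h1s' (neg_ne_zero.2 (ne_of_lt hs0)))]
          ring
        rw [this, Real.rpow_one]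
      set S := ∑ y, a y ^ (1 - s) * b y ^ s with hS
      have hSn : 0 ≤ S := Finset.sum_nonneg fun y _ => by
        exact mul_nonneg (Real.rpow_nonneg (han y) _) (Real.rpow_nonneg (hbn y) _)
      have holder := Real.inner_le_Lp_mul_Lq Finset.univ F G hpq
      rw [Finset.sum_congr rfl (fun y _ => hFG y),
        Finset.sum_congr rfl (fun y _ => hFp y),
        Finset.sum_congr rfl (fun y _ => hGq y)] at holder
      -- holder : A ≤ S ^ (1/(1-s)) * B ^ (1/((1-s)/(-s)))
      have hBexp : (B:ℝ) ^ (1 / ((1 - s) / -s)) = B ^ (-s / (1 - s)) := by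
        congr 1
        rw [one_div, inv_div]
      rw [hBexp] at holder
      -- raise to power (1-s)
      have hpow : A ^ (1 - s) ≤ S * B ^ (-s) := by
        calc A ^ (1 - s) ≤ (S ^ (1 / (1 - s)) * B ^ (-s / (1 - s))) ^ (1 - s) :=
              Real.rpow_le_rpow hAn holder h1s.le
          _ = S * B ^ (-s) := by
              rw [Real.mul_rpow (Real.rpow_nonneg hSn _) (Real.rpow_nonneg hBpos.le _),
                ← Real.rpow_mul hSn, ← Real.rpow_mul hBpos.le]
              rw [one_div_mul_cancel h1s', Real.rpow_one]
              congr 1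
              rw [div_mul_eq_mul_div, mul_div_assoc, div_self h1s', mul_one]
      have : A ^ (1 - s) * B ^ s ≤ S := by
        have hBs : 0 < B ^ s := Real.rpow_pos_of_pos hBpos s
        have := mul_le_mul_of_nonneg_right hpow hBs.le
        rwa [mul_assoc, ← Real.rpow_add hBpos, neg_add_cancel, Real.rpow_zero,
          mul_one] at this
      exact this.trans (Finset.sum_le_sum fun y _ => hmid y)
end

section
/- Let W, W̄ be channels from a finite input set X to a finite output set Y, let P⃗ⁿ = (P¹,…,Pⁿ) be any adaptive strategy (Pᵏ a conditional distribution of the k-th input given the first k−1 input-output pairs), and let Q_{W,P⃗ⁿ} denote the resulting joint distribution on (X×Y)ⁿ under W. Then D(Q_{W,P⃗ⁿ} ‖ Q_{W̄,P⃗ⁿ}) = Σ_{k=1}^n D(W‖W̄ | P_{W,P⃗ᵏ}) ≤ n · sup_{x∈X} D(W_x‖W̄_x), where P_{W,P⃗ᵏ} is the marginal distribution of the k-th input under W and D(W‖W̄|P) = Σ_x P(x) D(W_x‖W̄_x). -/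
open Filter

/-- `W` is a (classical) channel from `X` to `Y` with full-support outputs. -/
def IsChannel {X Y : Type*} [Fintype Y] (W : X → Y → ℝ) : Prop :=
  ∀ x, (∀ y, 0 < W x y) ∧ ∑ y, W x y = 1

/-- An adaptive strategy: for each step `k`, a conditional distribution of the
`(k+1)`-st input given the first `k` input-output pairs. -/
def IsStrategy {X Y : Type*} [Fintype X]
    (strat : (k : ℕ) → (Fin k → X × Y) → X → ℝ) : Prop :=
  ∀ k h, (∀ x, 0 ≤ strat k h x) ∧ ∑ x, strat k h x = 1

/-- Joint distribution of `n` adaptive input-output pairs under channel `W`. -/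
noncomputable def Qdist {X Y : Type*} [Fintype X] [Fintype Y] (W : X → Y → ℝ)
    (strat : (k : ℕ) → (Fin k → X × Y) → X → ℝ) (n : ℕ) (h : Fin n → X × Y) : ℝ :=
  ∏ k : Fin n,
    strat k.1 (fun j : Fin k.1 => h ⟨j.1, j.2.trans k.2⟩) (h k).1 * W (h k).1 (h k).2

/-- Marginal distribution of the `(k+1)`-st input under channel `W`. -/
noncomputable def inMarg {X Y : Type*} [Fintype X] [Fintype Y] (W : X → Y → ℝ)
    (strat : (k : ℕ) → (Fin k → X × Y) → X → ℝ) (k : ℕ) (x : X) : ℝ :=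
  ∑ h : Fin k → X × Y, Qdist W strat k h * strat k h x

/-- Kullback–Leibler divergence of finitely supported distributions. -/
noncomputable def Dkl {α : Type*} [Fintype α] (P Q : α → ℝ) : ℝ :=
  ∑ a, P a * Real.log (P a / Q a)

/-- `φ(s|P‖Q) = log ∑ Q^s P^{1-s}`. -/
noncomputable def phiRel {α : Type*} [Fintype α] (s : ℝ) (P Q : α → ℝ) : ℝ :=
  Real.log (∑ a, Q a ^ s * P a ^ (1 - s))

section aux
variable {X Y : Type*} [Fintype X] [Fintype Y]
  {W Wb : X → Y → ℝ} {strat : (k : ℕ) → (Fin k → X × Y) → X → ℝ}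

omit [Fintype X] [Fintype Y] in
lemma snoc_restrict {n : ℕ} (h : Fin n → X × Y) (p : X × Y) (m : ℕ) (hm : m ≤ n)
    (j : Fin m) (hj : (j : ℕ) < n + 1) :
    (Fin.snoc h p : Fin (n+1) → X × Y) ⟨j.1, hj⟩ = h ⟨j.1, lt_of_lt_of_le j.2 hm⟩ := by
  have : (⟨j.1, hj⟩ : Fin (n+1)) = Fin.castSucc ⟨j.1, lt_of_lt_of_le j.2 hm⟩ := rfl
  rw [this, Fin.snoc_castSucc]

lemma Qdist_snoc (n : ℕ) (h : Fin n → X × Y) (p : X × Y) :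
    Qdist W strat (n+1) (Fin.snoc h p) =
      Qdist W strat n h * (strat n h p.1 * W p.1 p.2) := by
  unfold Qdist
  rw [Fin.prod_univ_castSucc]
  congr 1
  · apply Finset.prod_congr rfl
    intro k _
    congr 1
    · congr 1
      · funext j
        exact snoc_restrict h p k.1 k.2.le j _
      · rw [Fin.snoc_castSucc]
    · rw [Fin.snoc_castSucc]
  · congr 1
    · congr 1
      · funext j
        exact snoc_restrict h p n le_rfl j _
      · rw [Fin.snoc_last]
    · rw [Fin.snoc_last]

lemma sum_snoc {M : Type*} [AddCommMonoid M] (n : ℕ) (f : (Fin (n+1) → X × Y) → M) :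
    ∑ g : Fin (n+1) → X × Y, f g =
      ∑ h : Fin n → X × Y, ∑ p : X × Y, f (Fin.snoc h p) := by
  rw [← Equiv.sum_comp (Fin.snocEquiv (fun _ => X × Y)) f, Fintype.sum_prod_type]
  rw [Finset.sum_comm]
  rfl

lemma Qdist_nonneg (hW : IsChannel W) (hs : IsStrategy strat) (n : ℕ) (h : Fin n → X × Y) :
    0 ≤ Qdist W strat n h :=
  Finset.prod_nonneg fun _ _ => mul_nonneg ((hs _ _).1 _) ((hW _).1 _).le

lemma Qdist_zero_iff (hW : IsChannel W) (hWb : IsChannel Wb) (n : ℕ) (h : Fin n → X × Y) :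
    Qdist W strat n h = 0 ↔ Qdist Wb strat n h = 0 := by
  unfold Qdist
  rw [Finset.prod_eq_zero_iff, Finset.prod_eq_zero_iff]
  constructor <;> rintro ⟨k, hk, hk0⟩ <;> refine ⟨k, hk, ?_⟩
  · rcases mul_eq_zero.1 hk0 with h0 | h0
    · rw [h0, zero_mul]
    · exact absurd h0 ((hW _).1 _).ne'
  · rcases mul_eq_zero.1 hk0 with h0 | h0
    · rw [h0, zero_mul]
    · exact absurd h0 ((hWb _).1 _).ne'

lemma Qdist_sum (hW : IsChannel W) (hs : IsStrategy strat) (n : ℕ) :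
    ∑ h : Fin n → X × Y, Qdist W strat n h = 1 := by
  induction n with
  | zero => simp [Qdist]
  | succ n ih =>
    rw [sum_snoc]
    have : ∀ h : Fin n → X × Y, ∑ p : X × Y, Qdist W strat (n+1) (Fin.snoc h p)
        = Qdist W strat n h := by
      intro h
      rw [Fintype.sum_prod_type]
      simp only [Qdist_snoc]
      calc ∑ x, ∑ y, Qdist W strat n h * (strat n h x * W x y)
          = ∑ x, Qdist W strat n h * strat n h x := by
            apply Finset.sum_congr rfl; intro x _
            rw [← Finset.mul_sum, ← Finset.mul_sum, (hW x).2, mul_one]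
        _ = Qdist W strat n h := by
            rw [← Finset.mul_sum, (hs n h).2, mul_one]
    simp only [this, ih]

lemma inMarg_sum (hW : IsChannel W) (hs : IsStrategy strat) (n : ℕ) :
    ∑ x, inMarg W strat n x = 1 := by
  unfold inMarg
  rw [Finset.sum_comm]
  calc ∑ h : Fin n → X × Y, ∑ x, Qdist W strat n h * strat n h x
      = ∑ h : Fin n → X × Y, Qdist W strat n h := by
        apply Finset.sum_congr rfl; intro h _
        rw [← Finset.mul_sum, (hs n h).2, mul_one]
    _ = 1 := Qdist_sum hW hs n

lemma inMarg_nonneg (hW : IsChannel W) (hs : IsStrategy strat) (n : ℕ) (x : X) :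
    0 ≤ inMarg W strat n x :=
  Finset.sum_nonneg fun h _ => mul_nonneg (Qdist_nonneg hW hs n h) ((hs n h).1 x)

lemma term_split {a b s w wb : ℝ} (ha : 0 ≤ a) (hb : 0 ≤ b) (hab : a = 0 ↔ b = 0)
    (hsn : 0 ≤ s) (hw : 0 < w) (hwb : 0 < wb) :
    a * (s * w) * Real.log (a * (s * w) / (b * (s * wb))) =
      s * (a * Real.log (a / b)) * w + a * s * (w * Real.log (w / wb)) := by
  rcases eq_or_lt_of_le ha with ha0 | ha0
  · rw [← ha0]; simp
  rcases eq_or_lt_of_le hsn with hs0 | hs0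
  · rw [← hs0]; simp
  have hb0 : 0 < b := lt_of_le_of_ne hb (fun hh => ha0.ne' (hab.2 hh.symm))
  have h1 : a * (s * w) / (b * (s * wb)) = (a / b) * (w / wb) := by
    field_simp
  rw [h1, Real.log_mul (by positivity) (by positivity)]
  ring

lemma Dkl_succ (hW : IsChannel W) (hWb : IsChannel Wb) (hs : IsStrategy strat) (n : ℕ) :
    Dkl (Qdist W strat (n+1)) (Qdist Wb strat (n+1)) =
      Dkl (Qdist W strat n) (Qdist Wb strat n) +
        ∑ x, inMarg W strat n x * Dkl (W x) (Wb x) := by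
  unfold Dkl
  rw [sum_snoc]
  have key : ∀ h : Fin n → X × Y, ∑ p : X × Y,
      Qdist W strat (n+1) (Fin.snoc h p) *
        Real.log (Qdist W strat (n+1) (Fin.snoc h p) / Qdist Wb strat (n+1) (Fin.snoc h p))
      = Qdist W strat n h * Real.log (Qdist W strat n h / Qdist Wb strat n h)
        + ∑ x, (Qdist W strat n h * strat n h x) * Dkl (W x) (Wb x) := by
    intro h
    rw [Fintype.sum_prod_type]
    have : ∀ x y, Qdist W strat (n+1) (Fin.snoc h (x, y)) *
        Real.log (Qdist W strat (n+1) (Fin.snoc h (x, y)) /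
          Qdist Wb strat (n+1) (Fin.snoc h (x, y)))
        = strat n h x * (Qdist W strat n h *
            Real.log (Qdist W strat n h / Qdist Wb strat n h)) * W x y
          + Qdist W strat n h * strat n h x * (W x y * Real.log (W x y / Wb x y)) := by
      intro x y
      rw [Qdist_snoc, Qdist_snoc]
      exact term_split (Qdist_nonneg hW hs n h) (Qdist_nonneg hWb hs n h)
        (Qdist_zero_iff hW hWb n h) ((hs n h).1 x) ((hW x).1 y) ((hWb x).1 y)
    simp only [this, Finset.sum_add_distrib]
    congr 1
    · calc ∑ x, ∑ y, strat n h x *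
            (Qdist W strat n h * Real.log (Qdist W strat n h / Qdist Wb strat n h)) * W x y
          = ∑ x, strat n h x *
            (Qdist W strat n h * Real.log (Qdist W strat n h / Qdist Wb strat n h)) := by
            apply Finset.sum_congr rfl; intro x _
            rw [← Finset.mul_sum, (hW x).2, mul_one]
        _ = _ := by rw [← Finset.sum_mul, (hs n h).2, one_mul]
    · apply Finset.sum_congr rfl; intro x _
      rw [← Finset.mul_sum]; rfl
  simp only [key, Finset.sum_add_distrib]
  congr 1
  rw [Finset.sum_comm]
  apply Finset.sum_congr rfl; intro x _
  rw [← Finset.sum_mul]; rfl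

end aux

theorem stmt8 {X Y : Type*} [Fintype X] [Fintype Y] [Nonempty X]
    (W Wb : X → Y → ℝ) (hW : IsChannel W) (hWb : IsChannel Wb)
    (strat : (k : ℕ) → (Fin k → X × Y) → X → ℝ) (hstrat : IsStrategy strat)
    (n : ℕ) :
    Dkl (Qdist W strat n) (Qdist Wb strat n) =
      ∑ k ∈ Finset.range n, ∑ x, inMarg W strat k x * Dkl (W x) (Wb x) ∧
    Dkl (Qdist W strat n) (Qdist Wb strat n) ≤ n * ⨆ x, Dkl (W x) (Wb x) := by
  have heq : ∀ m : ℕ, Dkl (Qdist W strat m) (Qdist Wb strat m) =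
      ∑ k ∈ Finset.range m, ∑ x, inMarg W strat k x * Dkl (W x) (Wb x) := by
    intro m
    induction m with
    | zero => simp [Dkl, Qdist]
    | succ m ih =>
      rw [Dkl_succ hW hWb hstrat, ih, Finset.sum_range_succ]
  refine ⟨heq n, ?_⟩
  rw [heq n]
  have hbdd : BddAbove (Set.range fun x => Dkl (W x) (Wb x)) :=
    Set.Finite.bddAbove (Set.finite_range _)
  calc ∑ k ∈ Finset.range n, ∑ x, inMarg W strat k x * Dkl (W x) (Wb x)
      ≤ ∑ k ∈ Finset.range n, (⨆ x, Dkl (W x) (Wb x)) := by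
        apply Finset.sum_le_sum
        intro k _
        calc ∑ x, inMarg W strat k x * Dkl (W x) (Wb x)
            ≤ ∑ x, inMarg W strat k x * ⨆ x, Dkl (W x) (Wb x) := by
              apply Finset.sum_le_sum
              intro x _
              exact mul_le_mul_of_nonneg_left (le_ciSup hbdd x)
                (inMarg_nonneg hW hstrat k x)
          _ = ⨆ x, Dkl (W x) (Wb x) := by
              rw [← Finset.sum_mul, inMarg_sum hW hstrat, one_mul]
    _ = n * ⨆ x, Dkl (W x) (Wb x) := by
        rw [Finset.sum_const, Finset.card_range, nsmul_eq_mul]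
end

section
/- For any adaptive strategy P⃗ⁿ and test f_n, the two error probabilities satisfy −h(E_{Q_{W,P⃗ⁿ}}[1−f_n]) − E_{Q_{W,P⃗ⁿ}}[1−f_n] · log E_{Q_{W̄,P⃗ⁿ}}[1−f_n] ≤ n · sup_{x∈X} D(W_x‖W̄_x), where h is the binary entropy function. -/
open Filter

/-- Binary entropy function. -/
noncomputable def binEnt (p : ℝ) : ℝ := -(p * Real.log p) - (1 - p) * Real.log (1 - p)

/-- Log-sum inequality. -/
lemma aux_logsum {ι : Type*} [Fintype ι] (a b : ι → ℝ) (ha : ∀ i, 0 ≤ a i)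
    (hb : ∀ i, 0 ≤ b i) (hab : ∀ i, b i = 0 → a i = 0) :
    (∑ i, a i) * Real.log ((∑ i, a i) / (∑ i, b i)) ≤ ∑ i, a i * Real.log (a i / b i) := by
  set A := ∑ i, a i with hA
  set B := ∑ i, b i with hBdef
  rcases eq_or_lt_of_le (Finset.sum_nonneg (fun i _ => ha i) : (0:ℝ) ≤ A) with h0 | hApos
  · have hz : ∀ i ∈ Finset.univ, a i = 0 :=
      (Finset.sum_eq_zero_iff_of_nonneg (fun i _ => ha i)).mp h0.symm
    have : ∀ i, a i = 0 := fun i => hz i (Finset.mem_univ i)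
    simp only [this, Finset.sum_const_zero, zero_mul, Real.log_zero, mul_zero]
    rw [show A = 0 from h0.symm]
    simp
  · have hBpos : 0 < B := by
      obtain ⟨i, hi⟩ : ∃ i, 0 < a i := by
        by_contra hc
        push_neg at hc
        have : A ≤ 0 := Finset.sum_nonpos (fun i _ => hc i)
        linarith
      have hbi : 0 < b i := by
        rcases (hb i).eq_or_lt with h | h
        · exact absurd (hab i h.symm) hi.ne'
        · exact h
      exact lt_of_lt_of_le hbi (Finset.single_le_sum (fun j _ => hb j) (Finset.mem_univ i))
    have key : ∀ i, a i * Real.log (A / B) + (a i - b i * (A / B)) ≤ a i * Real.log (a i / b i) := by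
      intro i
      rcases (ha i).eq_or_lt with h0i | h0i
      · have : (0:ℝ) ≤ b i * (A / B) := mul_nonneg (hb i) (div_nonneg hApos.le hBpos.le)
        simp [← h0i]
        linarith
      · have hbi : 0 < b i := by
          rcases (hb i).eq_or_lt with h | h
          · exact absurd (hab i h.symm) h0i.ne'
          · exact h
        have hx : 0 < (a i / b i) / (A / B) := by positivity
        have hlog : 1 - ((a i / b i) / (A / B))⁻¹ ≤ Real.log ((a i / b i) / (A / B)) :=
          Real.one_sub_inv_le_log_of_pos hx
        rw [Real.log_div (by positivity) (by positivity)] at hlog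
        have hinv : ((a i / b i) / (A / B))⁻¹ = b i * (A / B) / a i := by
          field_simp
        rw [hinv] at hlog
        have h2 := mul_le_mul_of_nonneg_left hlog h0i.le
        have heq : a i * (1 - b i * (A / B) / a i) = a i - b i * (A / B) := by
          field_simp
        rw [heq, mul_sub] at h2
        linarith
    calc A * Real.log (A / B)
        = ∑ i, (a i * Real.log (A / B) + (a i - b i * (A / B))) := by
          rw [Finset.sum_add_distrib, Finset.sum_sub_distrib, ← Finset.sum_mul, ← hA,
            ← Finset.sum_mul, ← hBdef]
          have : B * (A / B) = A := mul_div_cancel₀ A hBpos.ne'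
          linarith
      _ ≤ ∑ i, a i * Real.log (a i / b i) := Finset.sum_le_sum (fun i _ => key i)

/-- Gibbs inequality. -/
lemma aux_gibbs {α : Type*} [Fintype α] (P Q : α → ℝ) (hP : ∀ a, 0 < P a) (hQ : ∀ a, 0 < Q a)
    (hPs : ∑ a, P a = 1) (hQs : ∑ a, Q a = 1) : 0 ≤ Dkl P Q := by
  have := aux_logsum P Q (fun a => (hP a).le) (fun a => (hQ a).le)
    (fun a h => absurd h (hQ a).ne')
  rw [hPs, hQs] at this
  simpa [Dkl] using this

section QD
variable {X Y : Type*} [Fintype X] [Fintype Y] {W Wb : X → Y → ℝ}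
    {strat : (k : ℕ) → (Fin k → X × Y) → X → ℝ}

lemma qdist_snoc (W : X → Y → ℝ) (strat : (k : ℕ) → (Fin k → X × Y) → X → ℝ)
    (n : ℕ) (g : Fin n → X × Y) (z : X × Y) :
    Qdist W strat (n + 1) (Fin.snoc g z) =
      Qdist W strat n g * (strat n g z.1 * W z.1 z.2) := by
  unfold Qdist
  rw [Fin.prod_univ_castSucc]
  congr 1
  · apply Finset.prod_congr rfl
    intro k _
    have h1 : (Fin.snoc g z : Fin (n+1) → X × Y) (Fin.castSucc k) = g k :=
      Fin.snoc_castSucc ..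
    have h2 : (fun j : Fin (Fin.castSucc k).1 =>
        (Fin.snoc g z : Fin (n+1) → X × Y) ⟨j.1, j.2.trans (Fin.castSucc k).2⟩)
        = fun j : Fin k.1 => g ⟨j.1, j.2.trans k.2⟩ := by
      funext j
      have : (⟨j.1, j.2.trans (Fin.castSucc k).2⟩ : Fin (n+1))
          = Fin.castSucc ⟨j.1, j.2.trans k.2⟩ := rfl
      rw [this, Fin.snoc_castSucc]
    rw [h1, h2]
    rfl
  · have h3 : (Fin.snoc g z : Fin (n+1) → X × Y) (Fin.last n) = z := Fin.snoc_last ..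
    have h4 : (fun j : Fin (Fin.last n).1 =>
        (Fin.snoc g z : Fin (n+1) → X × Y) ⟨j.1, j.2.trans (Fin.last n).2⟩)
        = g := by
      funext j
      have : (⟨j.1, j.2.trans (Fin.last n).2⟩ : Fin (n+1)) = Fin.castSucc j := rfl
      rw [this, Fin.snoc_castSucc]
    rw [h3, h4]
    rfl

lemma sum_snoc_aux {Z : Type*} [Fintype Z] (n : ℕ) (F : (Fin (n + 1) → Z) → ℝ) :
    ∑ h : Fin (n + 1) → Z, F h = ∑ g : Fin n → Z, ∑ z : Z, F (Fin.snoc g z) := by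
  rw [← (Fin.snocEquiv (fun _ => Z)).sum_comp F]
  rw [Fintype.sum_prod_type]
  rw [Finset.sum_comm]
  rfl

lemma qdist_nonneg (hW : IsChannel W) (hstrat : IsStrategy strat) (n : ℕ) (h : Fin n → X × Y) :
    0 ≤ Qdist W strat n h :=
  Finset.prod_nonneg fun k _ => mul_nonneg ((hstrat _ _).1 _) ((hW _).1 _).le

lemma qdist_sum (hW : IsChannel W) (hstrat : IsStrategy strat) (n : ℕ) :
    ∑ h : Fin n → X × Y, Qdist W strat n h = 1 := by
  induction n with
  | zero => simp [Qdist]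
  | succ n ih =>
    rw [sum_snoc_aux]
    have key : ∀ g : Fin n → X × Y,
        ∑ z : X × Y, Qdist W strat (n+1) (Fin.snoc g z) = Qdist W strat n g := by
      intro g
      simp only [qdist_snoc]
      rw [Fintype.sum_prod_type]
      have inner : ∀ x, ∑ y, Qdist W strat n g * (strat n g x * W x y)
          = Qdist W strat n g * strat n g x := by
        intro x
        rw [← Finset.mul_sum, ← Finset.mul_sum, (hW x).2, mul_one]
      simp only [inner]
      rw [← Finset.mul_sum, (hstrat n g).2, mul_one]
    simp only [key]
    exact ih

lemma qdist_pos_transfer (hW : IsChannel W) (hWb : IsChannel Wb) (hstrat : IsStrategy strat)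
    (n : ℕ) (h : Fin n → X × Y) (hne : Qdist W strat n h ≠ 0) :
    0 < Qdist Wb strat n h := by
  unfold Qdist at hne ⊢
  rw [Finset.prod_ne_zero_iff] at hne
  apply Finset.prod_pos
  intro k hk
  have h1 := hne k hk
  have hs : strat k.1 (fun j : Fin k.1 => h ⟨j.1, j.2.trans k.2⟩) (h k).1 ≠ 0 := by
    intro h0
    exact h1 (by rw [h0, zero_mul])
  have hspos : 0 < strat k.1 (fun j : Fin k.1 => h ⟨j.1, j.2.trans k.2⟩) (h k).1 :=
    lt_of_le_of_ne ((hstrat _ _).1 _) (Ne.symm hs)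
  exact mul_pos hspos ((hWb _).1 _)

/-- Chain-rule bound for the adaptive KL divergence. -/
lemma dkl_chain (hW : IsChannel W) (hWb : IsChannel Wb) (hstrat : IsStrategy strat)
    (S : ℝ) (hS : ∀ x, Dkl (W x) (Wb x) ≤ S) (n : ℕ) :
    Dkl (Qdist W strat n) (Qdist Wb strat n) ≤ n * S := by
  induction n with
  | zero => simp [Dkl, Qdist]
  | succ n ih =>
    unfold Dkl
    rw [sum_snoc_aux]
    have key : ∀ g : Fin n → X × Y,
        ∑ z : X × Y, Qdist W strat (n+1) (Fin.snoc g z) *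
          Real.log (Qdist W strat (n+1) (Fin.snoc g z) / Qdist Wb strat (n+1) (Fin.snoc g z))
        ≤ Qdist W strat n g *
            Real.log (Qdist W strat n g / Qdist Wb strat n g) + Qdist W strat n g * S := by
      intro g
      set Q := Qdist W strat n g with hQdef
      set Q' := Qdist Wb strat n g with hQ'def
      have hQnn : 0 ≤ Q := qdist_nonneg hW hstrat n g
      simp only [qdist_snoc]
      rw [Fintype.sum_prod_type]
      have step : ∀ x, ∑ y, Q * (strat n g x * W x y) *
          Real.log (Q * (strat n g x * W x y) / (Q' * (strat n g x * Wb x y)))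
          = Q * strat n g x * (Real.log (Q / Q') + Dkl (W x) (Wb x)) := by
        intro x
        set s := strat n g x with hsdef
        have hsnn : 0 ≤ s := (hstrat n g).1 x
        rcases (mul_nonneg hQnn hsnn).eq_or_lt with h0 | h0
        · have hz : ∀ y, Q * (s * W x y) = 0 := by
            intro y
            calc Q * (s * W x y) = (Q * s) * W x y := by ring
            _ = 0 := by rw [← h0, zero_mul]
          simp only [hz, zero_mul, Finset.sum_const_zero, ← h0]
        · have hQpos : 0 < Q := by
            rcases hQnn.eq_or_lt with h | h
            · exfalso; rw [← h, zero_mul] at h0; exact lt_irrefl 0 h0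
            · exact h
          have hspos : 0 < s := by
            rcases hsnn.eq_or_lt with h | h
            · exfalso; rw [← h, mul_zero] at h0; exact lt_irrefl 0 h0
            · exact h
          have hQ'pos : 0 < Q' := qdist_pos_transfer hW hWb hstrat n g hQpos.ne'
          have hterm : ∀ y, Q * (s * W x y) *
              Real.log (Q * (s * W x y) / (Q' * (s * Wb x y)))
              = Q * (s * W x y) * Real.log (Q / Q')
                + Q * s * (W x y * Real.log (W x y / Wb x y)) := by
            intro y
            have hWpos := (hW x).1 y
            have hWbpos := (hWb x).1 y
            have hr : Q * (s * W x y) / (Q' * (s * Wb x y))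
                = (Q / Q') * (W x y / Wb x y) := by
              field_simp
            rw [hr, Real.log_mul (by positivity) (by positivity)]
            ring
          simp only [hterm]
          rw [Finset.sum_add_distrib]
          have e1 : ∑ y, Q * (s * W x y) * Real.log (Q / Q')
              = Q * s * Real.log (Q / Q') := by
            have : ∀ y, Q * (s * W x y) * Real.log (Q / Q')
                = (Q * s * Real.log (Q / Q')) * W x y := by intro y; ring
            simp only [this]
            rw [← Finset.mul_sum, (hW x).2, mul_one]
          have e2 : ∑ y, Q * s * (W x y * Real.log (W x y / Wb x y))
              = Q * s * Dkl (W x) (Wb x) := by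
            rw [← Finset.mul_sum]
            rfl
          rw [e1, e2]
          ring
      rw [← hQdef, ← hQ'def]
      simp only [step]
      have step2 : ∀ x, Q * strat n g x * (Real.log (Q / Q') + Dkl (W x) (Wb x))
          ≤ Q * strat n g x * (Real.log (Q / Q') + S) := by
        intro x
        exact mul_le_mul_of_nonneg_left (add_le_add (le_refl _) (hS x))
          (mul_nonneg hQnn ((hstrat n g).1 x))
      calc ∑ x, Q * strat n g x * (Real.log (Q / Q') + Dkl (W x) (Wb x))
          ≤ ∑ x, Q * strat n g x * (Real.log (Q / Q') + S) :=
            Finset.sum_le_sum (fun x _ => step2 x)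
        _ = Q * (Real.log (Q / Q') + S) := by
            have : ∀ x, Q * strat n g x * (Real.log (Q / Q') + S)
                = (Q * (Real.log (Q / Q') + S)) * strat n g x := by intro x; ring
            simp only [this]
            rw [← Finset.mul_sum, (hstrat n g).2, mul_one]
        _ = Q * Real.log (Q / Q') + Q * S := by ring
    calc ∑ g : Fin n → X × Y, ∑ z : X × Y, Qdist W strat (n+1) (Fin.snoc g z) *
          Real.log (Qdist W strat (n+1) (Fin.snoc g z) / Qdist Wb strat (n+1) (Fin.snoc g z))
        ≤ ∑ g : Fin n → X × Y, (Qdist W strat n g *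
            Real.log (Qdist W strat n g / Qdist Wb strat n g) + Qdist W strat n g * S) :=
          Finset.sum_le_sum (fun g _ => key g)
      _ = Dkl (Qdist W strat n) (Qdist Wb strat n) + S := by
          rw [Finset.sum_add_distrib, ← Finset.sum_mul, qdist_sum hW hstrat, one_mul]
          rfl
      _ ≤ n * S + S := by linarith
      _ = (n + 1 : ℕ) * S := by push_cast; ring

/-- Data processing inequality for a randomized binary test. -/
lemma dpi (hW : IsChannel W) (hWb : IsChannel Wb) (hstrat : IsStrategy strat)
    (n : ℕ) (g : (Fin n → X × Y) → ℝ) (hg : ∀ h, 0 ≤ g h ∧ g h ≤ 1) :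
    (∑ h : Fin n → X × Y, Qdist W strat n h * g h) *
        Real.log ((∑ h : Fin n → X × Y, Qdist W strat n h * g h) /
          (∑ h : Fin n → X × Y, Qdist Wb strat n h * g h)) +
      (1 - ∑ h : Fin n → X × Y, Qdist W strat n h * g h) *
        Real.log ((1 - ∑ h : Fin n → X × Y, Qdist W strat n h * g h) /
          (1 - ∑ h : Fin n → X × Y, Qdist Wb strat n h * g h)) ≤
      Dkl (Qdist W strat n) (Qdist Wb strat n) := by
  set a : (Fin n → X × Y) → ℝ := fun h => Qdist W strat n h * g h with hadef
  set b : (Fin n → X × Y) → ℝ := fun h => Qdist Wb strat n h * g h with hbdef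
  set a' : (Fin n → X × Y) → ℝ := fun h => Qdist W strat n h * (1 - g h) with ha'def
  set b' : (Fin n → X × Y) → ℝ := fun h => Qdist Wb strat n h * (1 - g h) with hb'def
  have hQnn : ∀ h, 0 ≤ Qdist W strat n h := qdist_nonneg hW hstrat n
  have hQ'nn : ∀ h, 0 ≤ Qdist Wb strat n h := qdist_nonneg hWb hstrat n
  have hsa : ∑ h, a h = ∑ h : Fin n → X × Y, Qdist W strat n h * g h := rfl
  have hsa' : ∑ h, a' h = 1 - ∑ h : Fin n → X × Y, Qdist W strat n h * g h := by
    simp only [ha'def, mul_sub, mul_one, Finset.sum_sub_distrib]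
    rw [qdist_sum hW hstrat]
  have hsb' : ∑ h, b' h = 1 - ∑ h : Fin n → X × Y, Qdist Wb strat n h * g h := by
    simp only [hb'def, mul_sub, mul_one, Finset.sum_sub_distrib]
    rw [qdist_sum hWb hstrat]
  have h1 := aux_logsum a b (fun h => mul_nonneg (hQnn h) (hg h).1)
    (fun h => mul_nonneg (hQ'nn h) (hg h).1)
    (fun h hb0 => by
      rcases mul_eq_zero.mp hb0 with h' | h'
      · have : Qdist W strat n h = 0 := by
          by_contra hc
          exact (qdist_pos_transfer hW hWb hstrat n h hc).ne' h'
        simp only [hadef, this, zero_mul]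
      · simp only [hadef, h', mul_zero])
  have h2 := aux_logsum a' b' (fun h => mul_nonneg (hQnn h) (by linarith [(hg h).2]))
    (fun h => mul_nonneg (hQ'nn h) (by linarith [(hg h).2]))
    (fun h hb0 => by
      rcases mul_eq_zero.mp hb0 with h' | h'
      · have : Qdist W strat n h = 0 := by
          by_contra hc
          exact (qdist_pos_transfer hW hWb hstrat n h hc).ne' h'
        simp only [ha'def, this, zero_mul]
      · simp only [ha'def, h', mul_zero])
  rw [hsa'] at h2
  rw [hsb'] at h2
  have hsplit : ∀ h, a h * Real.log (a h / b h) + a' h * Real.log (a' h / b' h)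
      = Qdist W strat n h * Real.log (Qdist W strat n h / Qdist Wb strat n h) := by
    intro h
    rcases (hQnn h).eq_or_lt with hQ0 | hQ0
    · have hQ0' : Qdist W strat n h = 0 := hQ0.symm
      simp only [hadef, ha'def, hQ0', zero_mul, Real.log_zero, mul_zero, add_zero,
        zero_div, zero_add]
    · have hQ'0 : 0 < Qdist Wb strat n h := qdist_pos_transfer hW hWb hstrat n h hQ0.ne'
      rcases (hg h).1.eq_or_lt with hg0 | hg0
      · simp only [hadef, hbdef, ha'def, hb'def, ← hg0, mul_zero, sub_zero, mul_one,
          zero_mul, Real.log_zero]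
        ring
      · rcases (hg h).2.eq_or_lt with hg1 | hg1
        · simp only [hadef, hbdef, ha'def, hb'def, hg1, sub_self, mul_zero, mul_one,
            zero_mul, Real.log_zero]
          ring
        · have e1 : a h / b h = Qdist W strat n h / Qdist Wb strat n h := by
            simp only [hadef, hbdef]
            rw [mul_comm (Qdist W strat n h) (g h), mul_comm (Qdist Wb strat n h) (g h),
              mul_div_mul_left _ _ hg0.ne']
          have e2 : a' h / b' h = Qdist W strat n h / Qdist Wb strat n h := by
            simp only [ha'def, hb'def]
            have hg2 : (1 : ℝ) - g h ≠ 0 := by linarith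
            rw [mul_comm (Qdist W strat n h) (1 - g h), mul_comm (Qdist Wb strat n h) (1 - g h),
              mul_div_mul_left _ _ hg2]
          rw [e1, e2]
          simp only [hadef, ha'def]
          ring
  have : Dkl (Qdist W strat n) (Qdist Wb strat n)
      = ∑ h, (a h * Real.log (a h / b h) + a' h * Real.log (a' h / b' h)) := by
    unfold Dkl
    exact (Finset.sum_congr rfl (fun h _ => (hsplit h))).symm
  rw [this, Finset.sum_add_distrib]
  exact add_le_add h1 h2

end QD

theorem stmt11 {X Y : Type*} [Fintype X] [Fintype Y] [Nonempty X]
    (W Wb : X → Y → ℝ) (hW : IsChannel W) (hWb : IsChannel Wb)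
    (strat : (k : ℕ) → (Fin k → X × Y) → X → ℝ) (hstrat : IsStrategy strat)
    (n : ℕ) (f : (Fin n → X × Y) → ℝ) (hf : ∀ h, f h ∈ Set.Icc (0 : ℝ) 1) :
    -binEnt (∑ h : Fin n → X × Y, Qdist W strat n h * (1 - f h)) -
      (∑ h : Fin n → X × Y, Qdist W strat n h * (1 - f h)) *
        Real.log (∑ h : Fin n → X × Y, Qdist Wb strat n h * (1 - f h)) ≤
      n * ⨆ x, Dkl (W x) (Wb x) := by
  set S := ⨆ x, Dkl (W x) (Wb x) with hSdef
  have hbdd : BddAbove (Set.range fun x => Dkl (W x) (Wb x)) :=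
    Set.Finite.bddAbove (Set.finite_range _)
  have hS : ∀ x, Dkl (W x) (Wb x) ≤ S := fun x => le_ciSup hbdd x
  have hS0 : 0 ≤ S := by
    obtain ⟨x⟩ := ‹Nonempty X›
    exact le_trans (aux_gibbs (W x) (Wb x) (hW x).1 (hWb x).1 (hW x).2 (hWb x).2) (hS x)
  have hg : ∀ h : Fin n → X × Y, 0 ≤ 1 - f h ∧ 1 - f h ≤ 1 :=
    fun h => ⟨by linarith [(hf h).2], by linarith [(hf h).1]⟩
  set α := ∑ h : Fin n → X × Y, Qdist W strat n h * (1 - f h) with hαdef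
  set β := ∑ h : Fin n → X × Y, Qdist Wb strat n h * (1 - f h) with hβdef
  have hQnn : ∀ h, 0 ≤ Qdist W strat n h := qdist_nonneg hW hstrat n
  have hQ'nn : ∀ h, 0 ≤ Qdist Wb strat n h := qdist_nonneg hWb hstrat n
  have hα0 : 0 ≤ α := Finset.sum_nonneg fun h _ => mul_nonneg (hQnn h) (hg h).1
  have hα1 : α ≤ 1 := by
    rw [hαdef]
    calc ∑ h : Fin n → X × Y, Qdist W strat n h * (1 - f h)
        ≤ ∑ h : Fin n → X × Y, Qdist W strat n h :=
          Finset.sum_le_sum fun h _ => mul_le_of_le_one_right (hQnn h) (hg h).2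
      _ = 1 := qdist_sum hW hstrat n
  have hβ0 : 0 ≤ β := Finset.sum_nonneg fun h _ => mul_nonneg (hQ'nn h) (hg h).1
  have hβ1 : β ≤ 1 := by
    rw [hβdef]
    calc ∑ h : Fin n → X × Y, Qdist Wb strat n h * (1 - f h)
        ≤ ∑ h : Fin n → X × Y, Qdist Wb strat n h :=
          Finset.sum_le_sum fun h _ => mul_le_of_le_one_right (hQ'nn h) (hg h).2
      _ = 1 := qdist_sum hWb hstrat n
  rcases hα0.eq_or_lt with hα | hα
  · rw [← hα]
    have hb0 : binEnt 0 = 0 := by simp [binEnt]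
    rw [hb0]
    simp only [neg_zero, zero_mul, sub_zero, zero_sub, neg_zero]
    exact mul_nonneg (Nat.cast_nonneg n) hS0
  · -- α > 0, hence β > 0
    have hβ : 0 < β := by
      obtain ⟨h, hh⟩ : ∃ h, 0 < Qdist W strat n h * (1 - f h) := by
        by_contra hc
        push_neg at hc
        have : α ≤ 0 := Finset.sum_nonpos fun h _ => hc h
        linarith
      have hQpos : 0 < Qdist W strat n h := by
        rcases (hQnn h).eq_or_lt with h' | h'
        · exfalso; rw [← h', zero_mul] at hh; exact lt_irrefl 0 hh
        · exact h'
      have hgpos : 0 < 1 - f h := by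
        rcases (hg h).1.eq_or_lt with h' | h'
        · exfalso; rw [← h', mul_zero] at hh; exact lt_irrefl 0 hh
        · exact h'
      have hQ'pos : 0 < Qdist Wb strat n h := qdist_pos_transfer hW hWb hstrat n h hQpos.ne'
      exact lt_of_lt_of_le (mul_pos hQ'pos hgpos)
        (Finset.single_le_sum (fun j _ => mul_nonneg (hQ'nn j) (hg j).1) (Finset.mem_univ h))
    have hDbin : α * Real.log (α / β) + (1 - α) * Real.log ((1 - α) / (1 - β)) ≤
        Dkl (Qdist W strat n) (Qdist Wb strat n) :=
      dpi hW hWb hstrat n (fun h => 1 - f h) hg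
    have hchain := dkl_chain hW hWb hstrat S hS n
    have hmain : -binEnt α - α * Real.log β ≤
        α * Real.log (α / β) + (1 - α) * Real.log ((1 - α) / (1 - β)) := by
      have hlogdiv : Real.log (α / β) = Real.log α - Real.log β :=
        Real.log_div hα.ne' hβ.ne'
      have hkey : (1 - α) * Real.log (1 - α) ≤ (1 - α) * Real.log ((1 - α) / (1 - β)) := by
        rcases eq_or_lt_of_le hα1 with hα1' | hα1'
        · rw [← hα1']
          simp
        · rcases eq_or_lt_of_le hβ1 with hβ1' | hβ1'
          · rw [← hβ1']
            simp only [sub_self, div_zero, Real.log_zero, mul_zero]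
            exact mul_nonpos_of_nonneg_of_nonpos (by linarith)
              (Real.log_nonpos (by linarith) (by linarith))
          · rw [Real.log_div (by linarith) (by linarith)]
            have hl : Real.log (1 - β) ≤ 0 := Real.log_nonpos (by linarith) (by linarith)
            nlinarith
      unfold binEnt
      rw [hlogdiv]
      nlinarith [hkey]
    calc -binEnt α - α * Real.log β
        ≤ α * Real.log (α / β) + (1 - α) * Real.log ((1 - α) / (1 - β)) := hmain
      _ ≤ Dkl (Qdist W strat n) (Qdist Wb strat n) := hDbin
      _ ≤ n * S := hchain
end
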